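/- Let H, K be finite-dimensional complex Hilbert spaces, T : H → K, and suppose there is a two-dimensional subspace P⊂H on which T has the degenerate form TPf = θ(f)(f, Df)^{1/2} g with D positive definite on P and g ∈ K, and suppose the full map f ↦ (Tf,·)Tf extends linearly on L(H). If the range of T is not contained in a single ray, a contradiction arises; hence the range of T is contained in a one-dimensional subspace [k], and Tf = θ(f)(f, L₁₁ f)^{1/2} k on all of H for some positive operator L₁₁. -/

import Mathlib

open scoped ComplexConjugate InnerProductSpace

/-- The rank-one operator `(e,·)e : f ↦ ⟪e, f⟫ e`. -/
noncomputable def rankOne {H : Type*} [NormedAddCommGroup H] [InnerProductSpace ℂ H]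
    (e : H) : H →ₗ[ℂ] H where
  toFun f := (inner ℂ e f : ℂ) • e
  map_add' x y := by simp [inner_add_right, add_smul]
  map_smul' c x := by simp [inner_smul_right, smul_smul]

/-- A positive operator: `⟪f, D f⟫ ≥ 0` (in particular real) for all `f`. -/
def IsPosOp {H : Type*} [NormedAddCommGroup H] [InnerProductSpace ℂ H]
    (D : H →ₗ[ℂ] H) : Prop :=
  ∀ f : H, 0 ≤ (inner ℂ f (D f) : ℂ).re ∧ (inner ℂ f (D f) : ℂ).im = 0

private lemma poly4 {c0 c1 c2 c3 c4 : ℂ}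
    (h : ∀ t : ℝ, c0 + c1*t + c2*t^2 + c3*t^3 + c4*t^4 = 0) :
    c0 = 0 ∧ c1 = 0 ∧ c2 = 0 ∧ c3 = 0 ∧ c4 = 0 := by
  have h0 := h 0
  have h1 := h 1
  have h2 := h (-1)
  have h3 := h 2
  have h4 := h (-2)
  push_cast at h0 h1 h2 h3 h4
  refine ⟨by linear_combination h0,
    by linear_combination (8*h1 - 8*h2 - h3 + h4)/12,
    by linear_combination (16*h1 + 16*h2 - h3 - h4 - 30*h0)/24,
    by linear_combination (h3 - h4 - 2*h1 + 2*h2)/12,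
    by linear_combination (h3 + h4 - 4*h1 - 4*h2 + 6*h0)/24⟩

private lemma coeffs {a b k f0 p q r s s' g2 : ℂ} (hf0 : f0 ≠ 0)
    (h : ∀ α : ℂ,
      (α*a + (conj α)*b + (conj α)*α*k) * conj (α*a + (conj α)*b + (conj α)*α*k)
        = (f0 + α*p + (conj α)*q + (conj α)*α*r) * (α*s + (conj α)*s' + (conj α)*α*g2)) :
    a * conj b = 0 ∧ a * conj a + b * conj b = f0 * g2 := by
  set J := Complex.I with hJ
  have hI : J * J = -1 := Complex.I_mul_I
  have hA : ∀ t : ℝ, (0:ℂ) + (f0*(s+s'))*t +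
      ((p+q)*(s+s') + f0*g2 - (a+b)*(conj a+conj b))*t^2 +
      ((p+q)*g2 + r*(s+s') - (a+b)*(conj k) - k*(conj a+conj b))*t^3 +
      (r*g2 - k*conj k)*t^4 = 0 := by
    intro t
    have := h (t : ℂ)
    simp only [map_add, map_mul, Complex.conj_ofReal] at this
    linear_combination -this
  have hB : ∀ t : ℝ, (0:ℂ) + (f0*(J*s - J*s'))*t +
      (-(J*J*(f0*g2)) + (J*p - J*q)*(J*s - J*s') - (J*a - J*b)*(-(J*conj a) + J*conj b))*t^2 +
      (-(J*J*((J*p - J*q)*g2)) - J*J*(r*(J*s - J*s'))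
        + J*J*((J*a - J*b)*conj k) + J*J*(k*(-(J*conj a) + J*conj b)))*t^3 +
      (J*J*(J*J)*(r*g2 - k*conj k))*t^4 = 0 := by
    intro t
    have := h (J * t)
    simp only [map_add, map_mul, map_neg, Complex.conj_ofReal, hJ.symm ▸ Complex.conj_I] at this
    linear_combination -this
  obtain ⟨-, hA1, hA2, -, -⟩ := poly4 hA
  obtain ⟨-, hB1, hB2, -, -⟩ := poly4 hB
  have e1' : s + s' = 0 := by
    rcases mul_eq_zero.1 hA1 with h' | h'
    · exact absurd h' hf0
    · exact h'
  have e2' : J*s - J*s' = 0 := by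
    rcases mul_eq_zero.1 hB1 with h' | h'
    · exact absurd h' hf0
    · exact h'
  have hs : s = 0 := by linear_combination e1'/2 - (J/2)*e2' + ((s - s')/2)*hI
  have hs' : s' = 0 := by linear_combination e1' - hs
  rw [hs, hs'] at hA2 hB2
  have hC : ∀ t : ℝ, (0:ℂ) + (0:ℂ)*t +
      ((1 - J*J)*(f0*g2) - ((1+J)*a + (1-J)*b)*((1-J)*conj a + (1+J)*conj b))*t^2 +
      (((1+J)*p + (1-J)*q)*((1-J*J)*g2) - ((1+J)*a + (1-J)*b)*((1-J*J)*conj k)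
        - ((1-J*J)*k)*((1-J)*conj a + (1+J)*conj b))*t^3 +
      ((1-J*J)*(1-J*J)*(r*g2 - k*conj k))*t^4 = 0 := by
    intro t
    have := h ((1+J) * t)
    simp only [map_add, map_mul, map_neg, map_one, Complex.conj_ofReal,
      hJ.symm ▸ Complex.conj_I] at this
    rw [hs, hs'] at this
    linear_combination -this
  obtain ⟨-, -, hC2, -, -⟩ := poly4 hC
  constructor
  · linear_combination (-(1/4) - J/4)*hA2 + (1/4 - J/4)*hB2 + (J/4)*hC2 +
      (-(1/4)*(a*conj a - a*conj b - b*conj a + b*conj b - f0*g2)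
        + (1/2)*(a*conj b - b*conj a))*hI
  · linear_combination (-(1/2))*hA2 + (-(1/2))*hB2 +
      ((a*conj a - a*conj b - b*conj a + b*conj b - f0*g2)/2)*hI

noncomputable def outer {H : Type*} [NormedAddCommGroup H] [InnerProductSpace ℂ H]
    (e f : H) : H →ₗ[ℂ] H where
  toFun x := (inner ℂ e x : ℂ) • f
  map_add' x y := by simp [inner_add_right, add_smul]
  map_smul' c x := by simp [inner_smul_right, smul_smul]

lemma outer_apply {H : Type*} [NormedAddCommGroup H] [InnerProductSpace ℂ H]
    (e f x : H) : outer e f x = (inner ℂ e x : ℂ) • f := rfl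

lemma rankOne_apply' {H : Type*} [NormedAddCommGroup H] [InnerProductSpace ℂ H]
    (e x : H) : rankOne e x = (inner ℂ e x : ℂ) • e := rfl

lemma rankOne_eq_outer {H : Type*} [NormedAddCommGroup H] [InnerProductSpace ℂ H]
    (e : H) : rankOne e = outer e e := LinearMap.ext fun _ => rfl

lemma outer_add_left {H : Type*} [NormedAddCommGroup H] [InnerProductSpace ℂ H]
    (e e' f : H) : outer (e + e') f = outer e f + outer e' f := by
  ext x; simp [outer_apply, inner_add_left, add_smul]

lemma outer_smul_left {H : Type*} [NormedAddCommGroup H] [InnerProductSpace ℂ H]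
    (c : ℂ) (e f : H) : outer (c • e) f = (conj c) • outer e f := by
  ext x; simp [outer_apply, inner_smul_left, smul_smul, mul_comm]

lemma outer_add_right {H : Type*} [NormedAddCommGroup H] [InnerProductSpace ℂ H]
    (e f f' : H) : outer e (f + f') = outer e f + outer e f' := by
  ext x; simp [outer_apply, smul_add]

lemma outer_smul_right {H : Type*} [NormedAddCommGroup H] [InnerProductSpace ℂ H]
    (c : ℂ) (e f : H) : outer e (c • f) = c • outer e f := by
  ext x; simp [outer_apply, smul_smul, mul_comm]

lemma rankOne_expand {H : Type*} [NormedAddCommGroup H] [InnerProductSpace ℂ H]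
    (f h : H) (α : ℂ) :
    rankOne (f + α • h) = rankOne f + (conj α * α) • rankOne h
      + α • outer f h + (conj α) • outer h f := by
  ext x
  simp only [LinearMap.add_apply, LinearMap.smul_apply, rankOne_apply', outer_apply,
    inner_add_left, inner_smul_left]
  module

lemma inner_rankOne {H : Type*} [NormedAddCommGroup H] [InnerProductSpace ℂ H]
    (y x z : H) : (inner ℂ y (rankOne x z) : ℂ) = (inner ℂ x z : ℂ) * (inner ℂ y x : ℂ) := by
  simp [rankOne_apply', inner_smul_right]

theorem stmt15 {H K : Type*}
    [NormedAddCommGroup H] [InnerProductSpace ℂ H] [FiniteDimensional ℂ H]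
    [NormedAddCommGroup K] [InnerProductSpace ℂ K] [FiniteDimensional ℂ K]
    (T : H → K)
    (hext : ∃ W : (H →ₗ[ℂ] H) →ₗ[ℂ] (K →ₗ[ℂ] K),
      ∀ f : H, W (rankOne f) = rankOne (T f))
    (P : Submodule ℂ H) (hP : Module.finrank ℂ P = 2)
    (g : K) (hg : g ≠ 0)
    (θ : H → ℂ) (hθ : ∀ f ∈ P, ‖θ f‖ = 1)
    (D : H →ₗ[ℂ] H)
    -- `D` positive definite on `P`:
    (hD : ∀ f ∈ P, (inner ℂ f (D f) : ℂ).im = 0 ∧ (f ≠ 0 → 0 < (inner ℂ f (D f) : ℂ).re))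
    -- degenerate form on `P`: `Tf = θ(f)(f,Df)^{1/2} g`
    (hdeg : ∀ f ∈ P, T f = θ f • ((Real.sqrt ((inner ℂ f (D f) : ℂ).re) : ℂ) • g)) :
    ∃ k : K, (∀ f : H, ∃ c : ℂ, T f = c • k) ∧
      ∃ (L₁₁ : H →ₗ[ℂ] H) (θ' : H → ℂ), IsPosOp L₁₁ ∧
        (∀ f : H, ‖θ' f‖ = 1) ∧
        ∀ f : H, T f = θ' f • ((Real.sqrt ((inner ℂ f (L₁₁ f) : ℂ).re) : ℂ) • k) := by
  obtain ⟨W, hW⟩ := hext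
  have hgg : (inner ℂ g g : ℂ) ≠ 0 := fun h0 => hg (inner_self_eq_zero.1 h0)
  -- Part 1: the range of `T` lies in the ray of `g`.
  have hray : ∀ h : H, ∃ c : ℂ, T h = c • g := by
    intro h
    by_contra hc
    push_neg at hc
    set w : K := T h with hw
    set u : K := w - ((inner ℂ g w : ℂ) / (inner ℂ g g : ℂ)) • g with hu
    have hgu : (inner ℂ g u : ℂ) = 0 := by
      rw [hu, inner_sub_right, inner_smul_right]
      field_simp
      ring
    have hune : u ≠ 0 := by
      intro h0
      apply hc ((inner ℂ g w : ℂ) / (inner ℂ g g : ℂ))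
      have : w - ((inner ℂ g w : ℂ) / (inner ℂ g g : ℂ)) • g = 0 := h0
      rw [sub_eq_zero] at this
      exact this
    have hug : (inner ℂ u g : ℂ) = 0 := by
      rw [← inner_conj_symm, hgu, map_zero]
    have huw : (inner ℂ u w : ℂ) = inner ℂ u u := by
      have hwd : w = u + ((inner ℂ g w : ℂ) / (inner ℂ g g : ℂ)) • g := by
        rw [hu]; abel
      rw [hwd, inner_add_right, inner_smul_right, hug, mul_zero, add_zero]
    have huu : (inner ℂ u u : ℂ) ≠ 0 := fun h0 => hune (inner_self_eq_zero.1 h0)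
    -- dichotomy for each nonzero element of P
    have main : ∀ f : H, f ∈ P → f ≠ 0 →
        (inner ℂ g ((W (outer f h)) u) : ℂ) * conj (inner ℂ g ((W (outer h f)) u) : ℂ) = 0 ∧
        (inner ℂ g ((W (outer f h)) u) : ℂ) * conj (inner ℂ g ((W (outer f h)) u) : ℂ) +
          (inner ℂ g ((W (outer h f)) u) : ℂ) * conj (inner ℂ g ((W (outer h f)) u) : ℂ)
          = ((inner ℂ (T f) g : ℂ) * (inner ℂ g (T f) : ℂ))
              * ((inner ℂ w u : ℂ) * (inner ℂ u w : ℂ)) ∧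
          ((inner ℂ (T f) g : ℂ) * (inner ℂ g (T f) : ℂ))
              * ((inner ℂ w u : ℂ) * (inner ℂ u w : ℂ)) ≠ 0 := by
      intro f hfP hf0
      have hTf := hdeg f hfP
      have hTfu : (inner ℂ (T f) u : ℂ) = 0 := by
        rw [hTf, inner_smul_left, inner_smul_left, hgu, mul_zero, mul_zero]
      have huTf : (inner ℂ u (T f) : ℂ) = 0 := by
        rw [← inner_conj_symm, hTfu, map_zero]
      have hf0' : (inner ℂ (T f) g : ℂ) * (inner ℂ g (T f) : ℂ) ≠ 0 := by
        have hgTf : (inner ℂ g (T f) : ℂ)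
            = θ f * ((Real.sqrt ((inner ℂ f (D f) : ℂ).re) : ℂ) * (inner ℂ g g : ℂ)) := by
          rw [hTf, inner_smul_right, inner_smul_right]
        have hθne : θ f ≠ 0 := by
          intro h0
          have := hθ f hfP
          rw [h0] at this
          simp at this
        have hsq : ((Real.sqrt ((inner ℂ f (D f) : ℂ).re) : ℝ) : ℂ) ≠ 0 := by
          have := (hD f hfP).2 hf0
          simp only [ne_eq, Complex.ofReal_eq_zero]
          positivity
        have h1 : (inner ℂ g (T f) : ℂ) ≠ 0 := by
          rw [hgTf]
          exact mul_ne_zero hθne (mul_ne_zero hsq hgg)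
        have h2 : (inner ℂ (T f) g : ℂ) ≠ 0 := by
          intro h0
          apply h1
          have := congrArg (starRingEnd ℂ) h0
          rwa [inner_conj_symm, map_zero] at this
        exact mul_ne_zero h2 h1
      have hg2 : ((inner ℂ w u : ℂ) * (inner ℂ u w : ℂ)) ≠ 0 := by
        apply mul_ne_zero
        · rw [← inner_conj_symm]
          rw [huw]
          simpa using huu
        · rw [huw]; exact huu
      -- operator expansion
      have hop : ∀ α : ℂ, rankOne (T (f + α • h))
          = rankOne (T f) + (conj α * α) • rankOne w + α • W (outer f h)
            + conj α • W (outer h f) := by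
        intro α
        rw [← hW, ← hW, ← hW, rankOne_expand, map_add, map_add, map_add, map_smul,
          map_smul, map_smul]
      have hkey : ∀ α : ℂ,
          (α * (inner ℂ g ((W (outer f h)) u) : ℂ)
            + (conj α) * (inner ℂ g ((W (outer h f)) u) : ℂ)
            + (conj α) * α * ((inner ℂ w u : ℂ) * (inner ℂ g w : ℂ)))
          * conj (α * (inner ℂ g ((W (outer f h)) u) : ℂ)
            + (conj α) * (inner ℂ g ((W (outer h f)) u) : ℂ)
            + (conj α) * α * ((inner ℂ w u : ℂ) * (inner ℂ g w : ℂ)))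
          = ((inner ℂ (T f) g : ℂ) * (inner ℂ g (T f) : ℂ)
              + α * (inner ℂ g ((W (outer f h)) g) : ℂ)
              + (conj α) * (inner ℂ g ((W (outer h f)) g) : ℂ)
              + (conj α) * α * ((inner ℂ w g : ℂ) * (inner ℂ g w : ℂ)))
            * (α * (inner ℂ u ((W (outer f h)) u) : ℂ)
              + (conj α) * (inner ℂ u ((W (outer h f)) u) : ℂ)
              + (conj α) * α * ((inner ℂ w u : ℂ) * (inner ℂ u w : ℂ))) := by
        intro α
        have e1 : α * (inner ℂ g ((W (outer f h)) u) : ℂ)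
            + conj α * (inner ℂ g ((W (outer h f)) u) : ℂ)
            + conj α * α * ((inner ℂ w u : ℂ) * (inner ℂ g w : ℂ))
            = (inner ℂ (T (f + α • h)) u : ℂ) * (inner ℂ g (T (f + α • h)) : ℂ) := by
          have := congrArg (fun M : K →ₗ[ℂ] K => (inner ℂ g (M u) : ℂ)) (hop α)
          simp only [LinearMap.add_apply, LinearMap.smul_apply, inner_add_right,
            inner_smul_right, inner_rankOne] at this
          rw [hTfu] at this
          linear_combination -this
        have e2 : ((inner ℂ (T f) g : ℂ) * (inner ℂ g (T f) : ℂ))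
            + α * (inner ℂ g ((W (outer f h)) g) : ℂ)
            + conj α * (inner ℂ g ((W (outer h f)) g) : ℂ)
            + conj α * α * ((inner ℂ w g : ℂ) * (inner ℂ g w : ℂ))
            = (inner ℂ (T (f + α • h)) g : ℂ) * (inner ℂ g (T (f + α • h)) : ℂ) := by
          have := congrArg (fun M : K →ₗ[ℂ] K => (inner ℂ g (M g) : ℂ)) (hop α)
          simp only [LinearMap.add_apply, LinearMap.smul_apply, inner_add_right,
            inner_smul_right, inner_rankOne] at this
          linear_combination -this
        have e3 : α * (inner ℂ u ((W (outer f h)) u) : ℂ)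
            + conj α * (inner ℂ u ((W (outer h f)) u) : ℂ)
            + conj α * α * ((inner ℂ w u : ℂ) * (inner ℂ u w : ℂ))
            = (inner ℂ (T (f + α • h)) u : ℂ) * (inner ℂ u (T (f + α • h)) : ℂ) := by
          have := congrArg (fun M : K →ₗ[ℂ] K => (inner ℂ u (M u) : ℂ)) (hop α)
          simp only [LinearMap.add_apply, LinearMap.smul_apply, inner_add_right,
            inner_smul_right, inner_rankOne] at this
          rw [hTfu, huTf] at this
          linear_combination -this
        rw [e1, e2, e3, map_mul, inner_conj_symm, inner_conj_symm]
        ring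
      obtain ⟨h1, h2⟩ := coeffs hf0' hkey
      exact ⟨h1, h2, mul_ne_zero hf0' hg2⟩
    -- linear functionals on P
    have hker : ∀ φ : P →ₗ[ℂ] ℂ, ∃ v : P, v ≠ 0 ∧ φ v = 0 := by
      intro φ
      have hlt : Module.finrank ℂ ℂ < Module.finrank ℂ P := by
        rw [hP, Module.finrank_self]; norm_num
      have := LinearMap.ker_ne_bot_of_finrank_lt hlt (f := φ)
      obtain ⟨v, hv, hv0⟩ := (Submodule.ne_bot_iff _).1 this
      exact ⟨v, hv0, hv⟩
    set la : P →ₗ[ℂ] ℂ :=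
      { toFun := fun f => conj (inner ℂ g ((W (outer (f : H) h)) u) : ℂ)
        map_add' := by
          intro x y
          have hxy : ((x + y : P) : H) = (x : H) + (y : H) := rfl
          rw [hxy, outer_add_left, map_add, LinearMap.add_apply, inner_add_right, map_add]
        map_smul' := by
          intro m x
          have hmx : ((m • x : P) : H) = m • (x : H) := rfl
          rw [hmx, outer_smul_left, map_smul, LinearMap.smul_apply,
            inner_smul_right, map_mul, Complex.conj_conj, RingHom.id_apply, smul_eq_mul] } with hla
    set lb : P →ₗ[ℂ] ℂ :=
      { toFun := fun f => (inner ℂ g ((W (outer h (f : H))) u) : ℂ)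
        map_add' := by
          intro x y
          have hxy : ((x + y : P) : H) = (x : H) + (y : H) := rfl
          rw [hxy, outer_add_right, map_add, LinearMap.add_apply, inner_add_right]
        map_smul' := by
          intro m x
          have hmx : ((m • x : P) : H) = m • (x : H) := rfl
          rw [hmx, outer_smul_right, map_smul, LinearMap.smul_apply,
            inner_smul_right, RingHom.id_apply, smul_eq_mul] } with hlb
    obtain ⟨v1, hv1ne, hv1⟩ := hker la
    obtain ⟨v2, hv2ne, hv2⟩ := hker lb
    have hv1c : (v1 : H) ≠ 0 := fun h0 => hv1ne (Subtype.ext h0)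
    have hv2c : (v2 : H) ≠ 0 := fun h0 => hv2ne (Subtype.ext h0)
    have ha1 : (inner ℂ g ((W (outer (v1 : H) h)) u) : ℂ) = 0 := by
      exact star_eq_zero.mp hv1
    have hb1 : (inner ℂ g ((W (outer h (v1 : H))) u) : ℂ) ≠ 0 := by
      intro h0
      obtain ⟨-, h2, hne⟩ := main (v1 : H) v1.2 hv1c
      rw [ha1, h0] at h2
      exact hne (by rw [← h2]; simp)
    have hb2 : (inner ℂ g ((W (outer h (v2 : H))) u) : ℂ) = 0 := hv2
    have ha2 : (inner ℂ g ((W (outer (v2 : H) h)) u) : ℂ) ≠ 0 := by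
      intro h0
      obtain ⟨-, h2, hne⟩ := main (v2 : H) v2.2 hv2c
      rw [h0, hb2] at h2
      exact hne (by rw [← h2]; simp)
    have hsne : ((v1 + v2 : P) : H) ≠ 0 := by
      intro h0
      have hz : v1 + v2 = 0 := Subtype.ext h0
      have hv2eq : v2 = -v1 := by
        rw [eq_neg_iff_add_eq_zero, add_comm]
        exact hz
      apply hb1
      have : lb v2 = 0 := hv2
      rw [hv2eq, map_neg] at this
      have hlbv1 : lb v1 = 0 := by
        have := neg_eq_zero.1 this
        exact this
      exact hlbv1
    obtain ⟨h1, -, -⟩ := main ((v1 + v2 : P) : H) (v1 + v2).2 hsne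
    rw [show ((v1 + v2 : P) : H) = (v1 : H) + (v2 : H) from rfl, outer_add_left,
      outer_add_right, map_add, map_add, LinearMap.add_apply, LinearMap.add_apply,
      inner_add_right, inner_add_right, ha1, hb2, zero_add, add_zero] at h1
    rcases mul_eq_zero.1 h1 with h' | h'
    · exact ha2 h'
    · exact hb1 (star_eq_zero.mp h')
  -- Part 2: construct the positive operator and phase
  choose c hc using hray
  have hgn : (‖g‖ : ℂ) ≠ 0 := by
    simp only [ne_eq, Complex.ofReal_eq_zero, norm_eq_zero]
    exact hg
  set φ : H → (H →ₗ[ℂ] ℂ) := fun qv =>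
    { toFun := fun pv => conj (inner ℂ g ((W (outer pv qv)) g) : ℂ)
      map_add' := by
        intro x y
        rw [outer_add_left, map_add, LinearMap.add_apply, inner_add_right, map_add]
      map_smul' := by
        intro m x
        rw [outer_smul_left, map_smul, LinearMap.smul_apply, inner_smul_right, map_mul,
          Complex.conj_conj, RingHom.id_apply, smul_eq_mul] } with hφ
  set Lfun : H → H := fun qv =>
    (((‖g‖ : ℂ) ^ 4)⁻¹) • (InnerProductSpace.toDual ℂ H).symm
      (LinearMap.toContinuousLinearMap (φ qv)) with hLfun
  have hL : ∀ pv qv : H, (inner ℂ pv (Lfun qv) : ℂ)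
      = ((‖g‖ : ℂ) ^ 4)⁻¹ * (inner ℂ g ((W (outer pv qv)) g) : ℂ) := by
    intro pv qv
    rw [hLfun]
    dsimp only
    rw [inner_smul_right]
    congr 1
    have h1 : (inner ℂ ((InnerProductSpace.toDual ℂ H).symm
        (LinearMap.toContinuousLinearMap (φ qv))) pv : ℂ)
        = (LinearMap.toContinuousLinearMap (φ qv)) pv :=
      InnerProductSpace.toDual_symm_apply
    have h2 : (inner ℂ pv ((InnerProductSpace.toDual ℂ H).symm
        (LinearMap.toContinuousLinearMap (φ qv))) : ℂ)
        = conj ((LinearMap.toContinuousLinearMap (φ qv)) pv) := by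
      rw [← h1, inner_conj_symm]
    rw [h2, LinearMap.coe_toContinuousLinearMap']
    simp [hφ]
  have hadd : ∀ x y : H, Lfun (x + y) = Lfun x + Lfun y := by
    intro x y
    apply ext_inner_left ℂ
    intro v
    rw [inner_add_right, hL, hL, hL, outer_add_right, map_add, LinearMap.add_apply,
      inner_add_right]
    ring
  have hsmul : ∀ (m : ℂ) (x : H), Lfun (m • x) = m • Lfun x := by
    intro m x
    apply ext_inner_left ℂ
    intro v
    rw [hL v (m • x), outer_smul_right, map_smul, LinearMap.smul_apply, inner_smul_right,
      inner_smul_right, hL v x]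
    ring
  set L : H →ₗ[ℂ] H :=
    { toFun := Lfun
      map_add' := hadd
      map_smul' := fun m x => hsmul m x } with hLdef
  have hLapp : ∀ f : H, L f = Lfun f := fun f => rfl
  have hLf : ∀ f : H, (inner ℂ f (L f) : ℂ) = ((Complex.normSq (c f) : ℝ) : ℂ) := by
    intro f
    rw [hLapp, hL f f, ← rankOne_eq_outer, hW, inner_rankOne, hc f, inner_smul_left,
      inner_smul_right, inner_self_eq_norm_sq_to_K, Complex.normSq_eq_conj_mul_self]
    field_simp
    rw [show ∀ x : ℝ, (RCLike.ofReal x : ℂ) = (x : ℂ) from fun _ => rfl]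
    ring
  refine ⟨g, fun f => ⟨c f, hc f⟩, L,
    (fun f => if c f = 0 then 1 else c f / (‖c f‖ : ℂ)), ?_, ?_, ?_⟩
  · intro f
    rw [hLf f]
    constructor
    · rw [Complex.ofReal_re]
      exact Complex.normSq_nonneg _
    · rw [Complex.ofReal_im]
  · intro f
    dsimp only
    split_ifs with h0
    · simp
    · have habs : ‖c f‖ ≠ 0 := by
        simpa using h0
      rw [norm_div, Complex.norm_real, norm_norm,
        div_self habs]
  · intro f
    dsimp only
    rw [hLf f, Complex.ofReal_re, ← Complex.norm_def, hc f]
    split_ifs with h0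
    · simp [h0]
    · have habs : (‖c f‖ : ℂ) ≠ 0 := by
        simpa using h0
      rw [smul_smul]
      congr 1
      field_simp
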